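/- Let a > 0 and define r(ρ, ψ) ≥ 0 near the ring by the relations r cosθ = ρ sinψ and (r² + a²) sin²θ = (a + ρ cosψ)², derived from the Kerr-Schild quartic. Then as ρ → 0⁺ with ψ fixed (ψ ≠ π), r(ρ, ψ)² / ρ → a(1 + cosψ), i.e. r ≈ √(a(1 + cosψ)ρ). -/

import Mathlib

set_option maxHeartbeats 1000000

open Filter Topology Set Real

/-- In toroidal coordinates around the ring, for `a > 0` and fixed direction `ψ ≠ π`
(i.e. `cos ψ ≠ −1`), if `r(ρ) ≥ 0` and `θ(ρ)` satisfy `r cos θ = ρ sin ψ` and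
`(r² + a²) sin²θ = (a + ρ cos ψ)²` near `ρ = 0⁺`, with `r(ρ) → 0`, then
`r(ρ)²/ρ → a(1 + cos ψ)` as `ρ → 0⁺`, i.e. `r ≈ √(a(1 + cos ψ)ρ)`. -/
theorem stmt_12 (a ψ : ℝ) (ha : 0 < a) (hψ : Real.cos ψ ≠ -1)
    (r θ : ℝ → ℝ)
    (hr0 : ∀ᶠ ρ in nhdsWithin 0 (Set.Ioi 0), 0 ≤ r ρ)
    (h1 : ∀ᶠ ρ in nhdsWithin 0 (Set.Ioi 0), r ρ * Real.cos (θ ρ) = ρ * Real.sin ψ)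
    (h2 : ∀ᶠ ρ in nhdsWithin 0 (Set.Ioi 0),
      ((r ρ) ^ 2 + a ^ 2) * Real.sin (θ ρ) ^ 2 = (a + ρ * Real.cos ψ) ^ 2)
    (hlim : Tendsto r (nhdsWithin 0 (Set.Ioi 0)) (nhds 0)) :
    Tendsto (fun ρ : ℝ => (r ρ) ^ 2 / ρ) (nhdsWithin 0 (Set.Ioi 0))
      (nhds (a * (1 + Real.cos ψ))) := by
  have hmem : ∀ᶠ ρ in nhdsWithin 0 (Set.Ioi 0), ρ ∈ Set.Ioi (0:ℝ) :=
    eventually_mem_nhdsWithin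
  have key : ∀ᶠ ρ in nhdsWithin 0 (Set.Ioi 0),
      (r ρ) ^ 2 / ρ = a * Real.cos ψ + Real.sqrt (a ^ 2 + (r ρ) ^ 2) := by
    filter_upwards [hmem, hr0, h1, h2] with ρ hρ hr he1 he2
    have hρ0 : (0:ℝ) < ρ := hρ
    set s := Real.sqrt (a ^ 2 + (r ρ) ^ 2) with hs
    have hs2 : s ^ 2 = a ^ 2 + (r ρ) ^ 2 := by
      rw [hs, Real.sq_sqrt]; positivity
    have hsnn : 0 ≤ s := Real.sqrt_nonneg _
    have hsa : a ≤ s := by nlinarith [sq_nonneg (r ρ)]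
    have hpyth : Real.sin (θ ρ) ^ 2 + Real.cos (θ ρ) ^ 2 = 1 := Real.sin_sq_add_cos_sq _
    have hpsiq : Real.sin ψ ^ 2 + Real.cos ψ ^ 2 = 1 := Real.sin_sq_add_cos_sq _
    have h1sq : (r ρ) ^ 2 * Real.cos (θ ρ) ^ 2 = ρ ^ 2 * Real.sin ψ ^ 2 := by
      linear_combination (r ρ * Real.cos (θ ρ) + ρ * Real.sin ψ) * he1
    have hquart : (r ρ) ^ 4 = (r ρ) ^ 2 * ρ ^ 2 + a ^ 2 * ρ ^ 2 * Real.sin ψ ^ 2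
        + 2 * a * ρ * Real.cos ψ * (r ρ) ^ 2 := by
      linear_combination (r ρ ^ 2) * he2 - (r ρ ^ 2) * (r ρ ^ 2 + a ^ 2) * hpyth
        + (r ρ ^ 2 + a ^ 2) * h1sq + (ρ ^ 2 * r ρ ^ 2) * hpsiq
    have hfact : ((r ρ) ^ 2 - (a * Real.cos ψ + s) * ρ)
        * ((r ρ) ^ 2 - (a * Real.cos ψ - s) * ρ) = 0 := by
      linear_combination hquart - ρ ^ 2 * hs2 + a ^ 2 * ρ ^ 2 * hpsiq
    rcases mul_eq_zero.mp hfact with h | h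
    · field_simp
      linarith [h]
    · exfalso
      have heq : (r ρ) ^ 2 = (a * Real.cos ψ - s) * ρ := by linarith
      have hcle : Real.cos ψ ≤ 1 := Real.cos_le_one ψ
      have hacψ : a * Real.cos ψ ≤ a := by nlinarith
      have hroot : a * Real.cos ψ - s ≤ 0 := by linarith
      have hr2nn : 0 ≤ (r ρ) ^ 2 := sq_nonneg _
      have hr2 : (r ρ) ^ 2 = 0 := by nlinarith
      have hrz : a * Real.cos ψ - s = 0 := by
        have := heq; rw [hr2] at this
        rcases mul_eq_zero.mp this.symm with h' | h'
        · exact h'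
        · exact absurd h' hρ0.ne'
      have hsA : s = a := by nlinarith
      have hc1 : Real.cos ψ = 1 := by
        apply mul_left_cancel₀ ha.ne'
        rw [mul_one]; linarith
      have hsle : Real.sin (θ ρ) ^ 2 ≤ 1 := by linarith [sq_nonneg (Real.cos (θ ρ))]
      rw [hr2, hc1] at he2
      nlinarith [he2, mul_le_mul_of_nonneg_left hsle (sq_nonneg a), mul_pos ha hρ0, sq_nonneg ρ]
  have hsqrt : Tendsto (fun ρ => Real.sqrt (a ^ 2 + (r ρ) ^ 2))
      (nhdsWithin 0 (Set.Ioi 0)) (nhds a) := by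
    have h := (Real.continuous_sqrt.tendsto (a ^ 2 + 0 ^ 2)).comp
      (tendsto_const_nhds.add (hlim.pow 2))
    simpa [Real.sqrt_sq ha.le, Function.comp_def] using h
  have hfinal : Tendsto (fun ρ => a * Real.cos ψ + Real.sqrt (a ^ 2 + (r ρ) ^ 2))
      (nhdsWithin 0 (Set.Ioi 0)) (nhds (a * (1 + Real.cos ψ))) := by
    have h := hsqrt.const_add (a * Real.cos ψ)
    have heq : a * Real.cos ψ + a = a * (1 + Real.cos ψ) := by ring
    rw [← heq]
    exact h
  exact hfinal.congr' (key.mono fun ρ h => h.symm)
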